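/- Let q ≥ 1, let s ∈ {1,…,q}, and let ρ : {1,…,q} → ℝ satisfy ρ(s) < 1 and ρ(p) > 1 for all p ≠ s. For each p let r_p : ℕ → ℝ be a sequence of estimates with r_p(n) → ρ(p) as n → ∞. Let σ : ℕ → {1,…,q} be a selection sequence and define the pull counts N_p(t) = #{τ < t : σ(τ) = p}. Assume the greedy property: for every t, if there exists p with r_p(N_p(t)) < 1 then r_{σ(t)}(N_{σ(t)}(t)) < 1. Assume also the exploration fairness property: if the set T = {t : r_p(N_p(t)) ≥ 1 for all p} is infinite, then for every p the set {t ∈ T : σ(t) = p} is infinite. Then {t : σ(t) = s} is infinite, and for every p ≠ s the set {t : σ(t) = p} is finite. -/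

import Mathlib

open Filter

lemma count_tendsto_atTop' {p : ℕ → Prop} [DecidablePred p] (hp : (setOf p).Infinite) :
    Tendsto (Nat.count p) atTop atTop := by
  apply tendsto_atTop_atTop.2
  intro b
  refine ⟨Nat.nth p b + 1, fun t ht => ?_⟩
  have h1 : Nat.count p (Nat.nth p b + 1) = b + 1 := Nat.count_nth_succ_of_infinite hp b
  have := Nat.count_monotone p ht
  omega

/- STATEMENT 12: Combinatorial core of the greedy bandit stabilization
argument: arm `s` is the unique arm with limiting estimate `ρ s < 1`
(all others have `ρ p > 1`), the estimates `r p n → ρ p`, the selection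
rule `σ` greedily picks an arm whose current estimate is `< 1` whenever one
exists, and exploration (when no arm looks stable) is fair. Then `s` is
chosen infinitely often and every other arm only finitely often. -/
theorem greedy_bandit_selects_stable_arm
    (q : ℕ) (hq : 1 ≤ q) (s : Fin q) (ρ : Fin q → ℝ)
    (hs : ρ s < 1) (hunstable : ∀ p : Fin q, p ≠ s → 1 < ρ p)
    (r : Fin q → ℕ → ℝ)
    (hr : ∀ p, Tendsto (r p) atTop (nhds (ρ p)))
    (σ : ℕ → Fin q) (N : Fin q → ℕ → ℕ)
    (hN : ∀ p t, N p t = ((Finset.range t).filter fun τ => σ τ = p).card)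
    (hgreedy : ∀ t, (∃ p, r p (N p t) < 1) → r (σ t) (N (σ t) t) < 1)
    (hfair : {t : ℕ | ∀ p, 1 ≤ r p (N p t)}.Infinite →
      ∀ p, {t : ℕ | (∀ p', 1 ≤ r p' (N p' t)) ∧ σ t = p}.Infinite) :
    {t : ℕ | σ t = s}.Infinite ∧
      ∀ p : Fin q, p ≠ s → {t : ℕ | σ t = p}.Finite := by
  -- If an arm is pulled infinitely often, its pull count tends to infinity.
  have hNt : ∀ p : Fin q, {t | σ t = p}.Infinite → Tendsto (fun t => N p t) atTop atTop := by
    intro p hp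
    have heq : (fun t => N p t) = Nat.count (fun τ => σ τ = p) := by
      funext t; rw [hN, Nat.count_eq_card_filter_range]
    rw [heq]
    exact count_tendsto_atTop' hp
  -- If an arm is pulled infinitely often, its running estimate converges to its true value.
  have hcomp : ∀ p : Fin q, {t | σ t = p}.Infinite →
      Tendsto (fun t => r p (N p t)) atTop (nhds (ρ p)) := fun p hp =>
    (hr p).comp (hNt p hp)
  -- The exploration set T is finite.
  have hTfin : {t : ℕ | ∀ p, 1 ≤ r p (N p t)}.Finite := by
    by_contra hTinf
    rw [← Set.not_infinite, not_not] at hTinf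
    have hall := hfair hTinf
    have hsinf : {t | σ t = s}.Infinite :=
      (hall s).mono (fun t ht => ht.2)
    have hev : ∀ᶠ t in atTop, r s (N s t) < 1 :=
      (hcomp s hsinf).eventually_lt_const hs
    have hfreq : ∃ᶠ t in atTop, ∀ p, 1 ≤ r p (N p t) :=
      Nat.frequently_atTop_iff_infinite.2 hTinf
    obtain ⟨t, ht1, ht2⟩ := (hfreq.and_eventually hev).exists
    exact absurd (ht1 s) (not_le.2 ht2)
  -- Eventually some arm looks stable, hence the greedy pick looks stable.
  have hevgreedy : ∀ᶠ t in atTop, r (σ t) (N (σ t) t) < 1 := by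
    have : ∀ᶠ t in atTop, t ∉ {t : ℕ | ∀ p, 1 ≤ r p (N p t)} := by
      rw [← Nat.cofinite_eq_atTop]
      exact Set.Finite.eventually_cofinite_notMem hTfin
    filter_upwards [this] with t ht
    apply hgreedy
    push_neg at ht
    obtain ⟨p, hp⟩ := ht
    exact ⟨p, hp⟩
  -- Each unstable arm is pulled only finitely often.
  have hfin : ∀ p : Fin q, p ≠ s → {t : ℕ | σ t = p}.Finite := by
    intro p hps
    by_contra hinf
    rw [← Set.not_infinite, not_not] at hinf
    have hev : ∀ᶠ t in atTop, 1 < r p (N p t) :=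
      (hcomp p hinf).eventually_const_lt (hunstable p hps)
    have hfreq : ∃ᶠ t in atTop, σ t = p :=
      Nat.frequently_atTop_iff_infinite.2 hinf
    obtain ⟨t, ht1, ht2, ht3⟩ := (hfreq.and_eventually (hev.and hevgreedy)).exists
    rw [ht1] at ht3
    exact absurd ht2 (not_lt.2 ht3.le)
  refine ⟨?_, hfin⟩
  -- The complement of {σ = s} is a finite union of finite sets.
  have hcompl : {t : ℕ | σ t = s}ᶜ ⊆ ⋃ p ∈ {p : Fin q | p ≠ s}, {t : ℕ | σ t = p} := by
    intro t ht
    simp only [Set.mem_compl_iff, Set.mem_setOf_eq] at ht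
    simp only [Set.mem_iUnion, Set.mem_setOf_eq]
    exact ⟨σ t, ht, rfl⟩
  have hcfin : ({t : ℕ | σ t = s}ᶜ).Finite :=
    Set.Finite.subset (Set.Finite.biUnion (Set.toFinite _) fun p hp => hfin p hp) hcompl
  have := hcfin.infinite_compl
  rwa [compl_compl] at this
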